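/- Let ρ ∈ [0,1) and let θ = (1-ρ)/2. For any number of allowed searches covering all sequences with at most k transitions, the MLTS success probability I_{1-θ}(L-1-k, k+1) = ∑_{i=0}^{k} C(L-1,i) θ^i (1-θ)^{L-1-i} is at least the random-guess success probability (∑_{i=0}^{k} 2·C(L-1,i)) / 2^L, with equality when ρ = 0. -/

import Mathlib

private lemma nat_id1 (n k : ℕ) :
    n * Nat.choose (n-1) k = Nat.choose n (k+1) * (k+1) := by
  cases n with
  | zero => simp
  | succ m => simpa using (Nat.add_one_mul_choose_eq m k)

private lemma nat_id2 (n k : ℕ) :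
    n * Nat.choose (n-1) (k+1) = Nat.choose n (k+1) * (n - (k+1)) := by
  cases n with
  | zero => simp
  | succ m =>
    have h1 := Nat.add_one_mul_choose_eq m (k+1)
    have h2 := Nat.choose_succ_right_eq (m+1) (k+1)
    simp only [Nat.succ_eq_add_one, Nat.succ_sub_one] at h1 h2 ⊢
    rw [h1]
    convert h2 using 3

private noncomputable def dterm (n i : ℕ) (x : ℝ) : ℝ :=
  (Nat.choose n i : ℝ) * ((i : ℝ) * x ^ (i-1)) * (1-x) ^ (n-i)
    + (Nat.choose n i : ℝ) * x ^ i * (((n-i : ℕ) : ℝ) * (1-x) ^ (n-i-1) * (-1))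

private lemma hasDeriv_term (n i : ℕ) (x : ℝ) :
    HasDerivAt (fun x : ℝ => (Nat.choose n i : ℝ) * x ^ i * (1-x) ^ (n-i))
      (dterm n i x) x := by
  have h1 : HasDerivAt (fun x : ℝ => (Nat.choose n i : ℝ) * x ^ i)
      ((Nat.choose n i : ℝ) * ((i : ℝ) * x ^ (i-1))) x :=
    (hasDerivAt_pow i x).const_mul _
  have h2 : HasDerivAt (fun x : ℝ => (1-x) ^ (n-i))
      (((n-i : ℕ) : ℝ) * (1-x) ^ (n-i-1) * (-1)) x :=
    ((hasDerivAt_id x).const_sub 1).pow _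
  simpa [dterm] using h1.fun_mul h2

private lemma sum_dterm (n k : ℕ) (x : ℝ) :
    ∑ i ∈ Finset.range (k+1), dterm n i x
      = -((n : ℝ) * (Nat.choose (n-1) k : ℝ) * x ^ k * (1-x) ^ (n-1-k)) := by
  induction k with
  | zero =>
    have hcast : ((n - 0 : ℕ) : ℝ) = (n : ℝ) := by norm_num
    simp only [Finset.sum_range_one, dterm, Nat.choose_zero_right, Nat.cast_one,
      pow_zero, Nat.cast_zero, zero_mul, mul_zero, zero_add, one_mul, hcast]
    have he : n - 0 - 1 = n - 1 - 0 := by omega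
    rw [he]; ring
  | succ k ih =>
    rw [Finset.sum_range_succ, ih]
    have e1 : ((Nat.choose n (k+1) : ℝ)) * ((k+1 : ℕ) : ℝ)
        = (n : ℝ) * (Nat.choose (n-1) k : ℝ) := by
      exact_mod_cast congrArg (Nat.cast (R := ℝ)) (nat_id1 n k).symm
    have e2 : ((Nat.choose n (k+1) : ℝ)) * ((n - (k+1) : ℕ) : ℝ)
        = (n : ℝ) * (Nat.choose (n-1) (k+1) : ℝ) := by
      exact_mod_cast congrArg (Nat.cast (R := ℝ)) (nat_id2 n k).symm
    have ex1 : n - (k+1) = n - 1 - k := by omega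
    have ex2 : n - (k+1) - 1 = n - 1 - (k+1) := by omega
    have ex3 : (k+1) - 1 = k := by omega
    have ex4 : n - 1 - k - 1 = n - 1 - (k+1) := by omega
    rw [ex1] at e2
    simp only [dterm, ex2, ex1, ex3, ex4]
    push_cast at e1 e2 ⊢
    linear_combination (x^k * (1-x)^(n-1-k)) * e1
      - (x^(k+1) * (1-x)^(n-1-(k+1))) * e2

private lemma hasDeriv_f (n k : ℕ) (x : ℝ) :
    HasDerivAt (fun x : ℝ => ∑ i ∈ Finset.range (k+1),
        (Nat.choose n i : ℝ) * x ^ i * (1-x) ^ (n-i))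
      (-((n : ℝ) * (Nat.choose (n-1) k : ℝ) * x ^ k * (1-x) ^ (n-1-k))) x := by
  rw [← sum_dterm n k x]
  exact HasDerivAt.fun_sum (fun i _ => hasDeriv_term n i x)

private lemma f_antitone (n k : ℕ) :
    AntitoneOn (fun x : ℝ => ∑ i ∈ Finset.range (k+1),
        (Nat.choose n i : ℝ) * x ^ i * (1-x) ^ (n-i)) (Set.Icc 0 1) := by
  apply antitoneOn_of_deriv_nonpos (convex_Icc 0 1)
  · exact fun x _ => (hasDeriv_f n k x).continuousAt.continuousWithinAt
  · exact fun x _ => (hasDeriv_f n k x).differentiableAt.differentiableWithinAt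
  · intro x hx
    rw [interior_Icc] at hx
    rw [(hasDeriv_f n k x).deriv]
    have h1 : (0:ℝ) ≤ 1 - x := by linarith [hx.2]
    have h0 : (0:ℝ) ≤ x := le_of_lt hx.1
    have : (0:ℝ) ≤ (n : ℝ) * (Nat.choose (n-1) k : ℝ) * x ^ k * (1-x) ^ (n-1-k) := by
      apply mul_nonneg
      apply mul_nonneg
      apply mul_nonneg
      · positivity
      · positivity
      · exact pow_nonneg h0 _
      · exact pow_nonneg h1 _
    linarith

private lemma f_half (n k : ℕ) (hk : k ≤ n) (L : ℕ) (hL : L = n + 1) :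
    ∑ i ∈ Finset.range (k+1),
        (Nat.choose n i : ℝ) * (1/2 : ℝ) ^ i * (1 - 1/2 : ℝ) ^ (n-i)
      = (∑ i ∈ Finset.range (k+1), 2 * (Nat.choose n i : ℝ)) / 2 ^ L := by
  rw [Finset.sum_div]
  apply Finset.sum_congr rfl
  intro i hi
  have hi' : i ≤ n := le_trans (Nat.lt_succ_iff.mp (Finset.mem_range.mp hi)) hk
  have h1 : (1 - 1/2 : ℝ) = 1/2 := by norm_num
  have h2 : (1/2 : ℝ) ^ i * (1/2 : ℝ) ^ (n - i) = (1/2 : ℝ) ^ n := by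
    rw [← pow_add]; congr 1; omega
  rw [h1, mul_assoc, h2, hL]
  have h3 : (2 : ℝ) ^ (n+1) = 2 * 2 ^ n := by ring
  rw [h3]
  have h4 : (2:ℝ) ^ n ≠ 0 := by positivity
  field_simp
  rw [mul_assoc, ← mul_pow]; norm_num

/-- MLTS success probability dominates the random-guess success probability,
with equality at `ρ = 0`. -/
theorem mlts_ge_random_guess (ρ : ℝ) (hρ : ρ ∈ Set.Ico (0:ℝ) 1)
    (θ : ℝ) (hθ : θ = (1 - ρ)/2) (L k : ℕ) (hL : 1 ≤ L) (hk : k ≤ L - 1) :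
    (∑ i ∈ Finset.range (k+1),
        (Nat.choose (L-1) i : ℝ) * θ ^ i * (1-θ) ^ (L-1-i))
      ≥ (∑ i ∈ Finset.range (k+1), 2 * (Nat.choose (L-1) i : ℝ)) / 2 ^ L
    ∧ (ρ = 0 →
      (∑ i ∈ Finset.range (k+1),
          (Nat.choose (L-1) i : ℝ) * θ ^ i * (1-θ) ^ (L-1-i))
        = (∑ i ∈ Finset.range (k+1), 2 * (Nat.choose (L-1) i : ℝ)) / 2 ^ L) := by
  obtain ⟨hρ0, hρ1⟩ := hρ
  set n := L - 1 with hn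
  have hLn : L = n + 1 := by omega
  have hθ0 : 0 ≤ θ := by rw [hθ]; linarith
  have hθhalf : θ ≤ 1/2 := by rw [hθ]; linarith
  have hθ1 : θ ≤ 1 := by linarith
  have hhalf : (1/2 : ℝ) ∈ Set.Icc (0:ℝ) 1 := by norm_num
  have hθmem : θ ∈ Set.Icc (0:ℝ) 1 := ⟨hθ0, hθ1⟩
  have hmono := f_antitone n k hθmem hhalf hθhalf
  have hfh := f_half n k hk L hLn
  constructor
  · calc (∑ i ∈ Finset.range (k+1),
        (Nat.choose n i : ℝ) * θ ^ i * (1-θ) ^ (n-i))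
        ≥ ∑ i ∈ Finset.range (k+1),
            (Nat.choose n i : ℝ) * (1/2:ℝ) ^ i * (1 - 1/2 : ℝ) ^ (n-i) := hmono
      _ = (∑ i ∈ Finset.range (k+1), 2 * (Nat.choose n i : ℝ)) / 2 ^ L := hfh
  · intro hρeq
    have : θ = 1/2 := by rw [hθ, hρeq]; norm_num
    rw [this]
    exact hfh
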